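/- Let A be a real symmetric D×D matrix and let P_s = trace(A^s). Then for all natural numbers s, m with 1 ≤ s < 2m, P_s^{2m} ≤ D^{2m-s} · P_{2m}^s. -/

import Mathlib

open Finset

lemma conj_mul_aux {n : ℕ} (U X Y : Matrix (Fin n) (Fin n) ℝ) (hU : star U * U = 1) :
    (U * X * star U) * (U * Y * star U) = U * (X * Y) * star U := by
  simp only [Matrix.mul_assoc]
  rw [← Matrix.mul_assoc (star U) U (Y * star U), hU, Matrix.one_mul]

/-- Trace of a power of a Hermitian matrix is the sum of powers of eigenvalues. -/
lemma trace_pow_eq_sum_eigenvalues {n : ℕ} (A : Matrix (Fin n) (Fin n) ℝ)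
    (hA : A.IsHermitian) (k : ℕ) :
    (A ^ k).trace = ∑ i, hA.eigenvalues i ^ k := by
  set U := (hA.eigenvectorUnitary : Matrix (Fin n) (Fin n) ℝ) with hUdef
  have hU : star U * U = 1 := Matrix.mem_unitaryGroup_iff'.mp hA.eigenvectorUnitary.2
  set Dg := Matrix.diagonal ((RCLike.ofReal ∘ hA.eigenvalues : Fin n → ℝ)) with hDg
  have hpow : A ^ k = U * Dg ^ k * star U := by
    induction k with
    | zero =>
      simp [Matrix.mem_unitaryGroup_iff.mp hA.eigenvectorUnitary.2]
      exact (Matrix.mem_unitaryGroup_iff.mp hA.eigenvectorUnitary.2).symm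
    | succ k ih =>
      calc A ^ (k + 1) = A ^ k * A := pow_succ A k
        _ = (U * Dg ^ k * star U) * (U * Dg * star U) := by
            rw [ih]; congr 1; exact hA.spectral_theorem
        _ = U * (Dg ^ k * Dg) * star U := conj_mul_aux U _ _ hU
        _ = U * Dg ^ (k + 1) * star U := by rw [← pow_succ]
  rw [hpow, Matrix.trace_mul_cycle, hU, Matrix.one_mul, hDg,
    Matrix.diagonal_pow, Matrix.trace_diagonal]
  simp [Function.comp]

/-- Power-mean inequality for nonnegative reals. -/
lemma key_nnreal {D : ℕ} (s m : ℕ) (hs : 1 ≤ s) (hsm : s < 2 * m) (f : Fin D → NNReal) :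
    (∑ i, f i ^ s) ^ (2 * m) ≤ (D : NNReal) ^ (2 * m - s) * (∑ i, f i ^ (2 * m)) ^ s := by
  set p : ℝ := (2 * m : ℝ) / s with hp
  set q : ℝ := (2 * m : ℝ) / (2 * m - s : ℝ) with hq
  have hs0 : (0:ℝ) < s := by exact_mod_cast hs
  have hm0 : (0:ℝ) < 2 * m := lt_trans hs0 (by exact_mod_cast hsm)
  have hms : (0:ℝ) < (2*m : ℝ) - s := by
    have : (s:ℝ) < 2*m := by exact_mod_cast hsm
    linarith
  have hpq : p.HolderConjugate q := by
    rw [Real.holderConjugate_iff]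
    constructor
    · rw [hp, lt_div_iff₀ hs0, one_mul]; exact_mod_cast hsm
    · rw [hp, hq]; field_simp
      rw [div_eq_iff (ne_of_gt (by linarith))]; ring
  have holder := NNReal.inner_le_Lp_mul_Lq (Finset.univ) (fun i => f i ^ s) (fun _ => 1) hpq
  simp only [mul_one, NNReal.one_rpow, Finset.sum_const, Finset.card_univ, Fintype.card_fin,
    nsmul_eq_mul, mul_one] at holder
  have hrw : ∀ i : Fin D, (f i ^ s : NNReal) ^ p = f i ^ ((2:ℝ) * m) := by
    intro i
    rw [← NNReal.rpow_natCast (f i) s, ← NNReal.rpow_mul]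
    congr 1
    rw [hp]; field_simp
  simp only [hrw] at holder
  have h2 := NNReal.rpow_le_rpow holder (le_of_lt hm0)
  rw [NNReal.mul_rpow, ← NNReal.rpow_mul, ← NNReal.rpow_mul] at h2
  have e1 : 1 / p * (2 * m : ℝ) = s := by rw [hp]; field_simp; exact div_self (ne_of_gt (by linarith))
  have e2 : 1 / q * (2 * m : ℝ) = (2*m : ℝ) - s := by rw [hq]; field_simp; exact div_self (ne_of_gt (by linarith))
  rw [e1, e2] at h2
  have hL : (∑ i, f i ^ s) ^ (2 * m) = (∑ i, f i ^ s) ^ ((2:ℝ) * m) := by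
    rw [← NNReal.rpow_natCast (∑ i, f i ^ s) (2*m)]
    congr 1; push_cast; ring
  have hIn : ∀ i : Fin D, f i ^ ((2:ℝ) * m) = f i ^ (2 * m) := by
    intro i
    rw [← NNReal.rpow_natCast (f i) (2*m)]
    congr 1; push_cast; ring
  have hD : ((D : NNReal)) ^ ((2:ℝ)*m - s) = (D : NNReal) ^ (2*m - s) := by
    rw [← NNReal.rpow_natCast (D : NNReal) (2*m - s)]
    congr 1
    have : ((2*m - s : ℕ) : ℝ) = 2*m - s := by
      push_cast [Nat.cast_sub hsm.le]; ring
    rw [this]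
  have hS : (∑ i, f i ^ ((2:ℝ) * m)) ^ (s:ℝ) = (∑ i, f i ^ (2*m)) ^ s := by
    simp_rw [hIn]
    rw [NNReal.rpow_natCast]
  rw [hL]
  calc (∑ i, f i ^ s) ^ ((2:ℝ) * m)
      ≤ (∑ i, f i ^ ((2:ℝ) * m)) ^ (s:ℝ) * (D : NNReal) ^ ((2:ℝ)*m - s) := h2
    _ = (D : NNReal) ^ (2*m - s) * (∑ i, f i ^ (2*m)) ^ s := by
        rw [hS, hD, mul_comm]

theorem stmt_6 (D : ℕ) (hD : 1 ≤ D) (A : Matrix (Fin D) (Fin D) ℝ) (hA : A.IsSymm)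
    (s m : ℕ) (hs : 1 ≤ s) (hsm : s < 2 * m) :
    (A ^ s).trace ^ (2 * m) ≤ (D : ℝ) ^ (2 * m - s) * (A ^ (2 * m)).trace ^ s := by
  have hA' : A.IsHermitian := by
    rwa [Matrix.IsHermitian, Matrix.conjTranspose_eq_transpose_of_trivial]
  set lam := hA'.eigenvalues with hlam
  have hts : (A ^ s).trace = ∑ i, lam i ^ s := trace_pow_eq_sum_eigenvalues A hA' s
  have htm : (A ^ (2*m)).trace = ∑ i, lam i ^ (2*m) := trace_pow_eq_sum_eigenvalues A hA' (2*m)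
  rw [hts, htm]
  set f : Fin D → NNReal := fun i => ‖lam i‖₊ with hf
  have key := key_nnreal s m hs hsm f
  have hfabs : ∀ i, ((f i : ℝ)) = |lam i| := fun i => by simp [hf]
  have hcastL : ((∑ i, f i ^ s : NNReal) : ℝ) = ∑ i, |lam i| ^ s := by
    push_cast; simp [hfabs]
  have hcastM : ((∑ i, f i ^ (2*m) : NNReal) : ℝ) = ∑ i, lam i ^ (2*m) := by
    push_cast
    refine Finset.sum_congr rfl fun i _ => ?_
    rw [hfabs, ← abs_pow, abs_of_nonneg ((even_two_mul m).pow_nonneg _)]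
  have hkey : (∑ i, |lam i| ^ s) ^ (2*m) ≤ (D:ℝ) ^ (2*m - s) * (∑ i, lam i ^ (2*m)) ^ s := by
    have h := NNReal.coe_le_coe.mpr key
    rw [NNReal.coe_mul, NNReal.coe_pow, NNReal.coe_pow, NNReal.coe_pow, hcastL, hcastM] at h
    simpa using h
  refine le_trans ?_ hkey
  have habs : (∑ i, lam i ^ s) ^ (2*m) = |∑ i, lam i ^ s| ^ (2*m) := (even_two_mul m).pow_abs _ |>.symm
  rw [habs]
  exact pow_le_pow_left₀ (abs_nonneg _)
    (le_trans (Finset.abs_sum_le_sum_abs _ _)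
      (Finset.sum_le_sum fun i _ => le_of_eq (abs_pow _ _))) _
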